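/- Let a > 1 and let t_n be a sequence of nonzero reals tending to 0. Then the closure of the group generated by the matrices [[1,0],[t_n,1]] (n ∈ ℕ) and [[a,0],[0,1]] inside GL(2,ℝ) contains all matrices of the form [[a^n, 0],[t, 1]] with n ∈ ℤ and t ∈ ℝ. -/

import Mathlib

open Filter

noncomputable def unip (s : ℝ) : GL (Fin 2) ℝ :=
  ⟨!![1, 0; s, 1], !![1, 0; -s, 1],
   by ext i j; fin_cases i <;> fin_cases j <;>
    simp [Matrix.mul_apply, Fin.sum_univ_two],
   by ext i j; fin_cases i <;> fin_cases j <;>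
    simp [Matrix.mul_apply, Fin.sum_univ_two]⟩

@[simp] lemma unip_val (s : ℝ) : (unip s : Matrix (Fin 2) (Fin 2) ℝ) = !![1, 0; s, 1] := rfl

lemma unip_add (x y : ℝ) : unip (x + y) = unip x * unip y := by
  ext i j
  show (!![(1:ℝ), 0; x+y, 1]) i j = (!![(1:ℝ),0;x,1] * !![(1:ℝ),0;y,1]) i j
  fin_cases i <;> fin_cases j <;>
    simp [Matrix.mul_apply, Fin.sum_univ_two]

lemma unip_zero : unip 0 = 1 := by
  ext i j
  show (!![(1:ℝ), 0; 0, 1]) i j = (1 : Matrix (Fin 2) (Fin 2) ℝ) i j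
  fin_cases i <;> fin_cases j <;> simp

lemma unip_neg (x : ℝ) : unip (-x) = (unip x)⁻¹ := by
  rw [eq_inv_iff_mul_eq_one, ← unip_add]
  simp [unip_zero]

lemma unip_zsmul (z : ℤ) (x : ℝ) : unip (z * x) = unip x ^ z := by
  induction z using Int.induction_on with
  | zero => simpa using unip_zero
  | succ n ih => push_cast at ih ⊢; rw [zpow_add_one, add_mul, one_mul, unip_add, ih]
  | pred n ih => push_cast at ih ⊢; rw [zpow_sub_one, sub_mul, one_mul, sub_eq_add_neg, unip_add, ih, unip_neg]

lemma continuous_unip : Continuous unip := by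
  apply Units.continuous_iff.2
  constructor
  · apply continuous_matrix
    intro i j
    fin_cases i <;> fin_cases j <;> simp <;> continuity
  · apply continuous_matrix
    intro i j
    show Continuous fun x => (!![(1:ℝ),0;-x,1]) i j
    fin_cases i <;> fin_cases j <;> simp <;> continuity

noncomputable def diagA (a : ℝ) (ha : a ≠ 0) : GL (Fin 2) ℝ :=
  ⟨!![a, 0; 0, 1], !![a⁻¹, 0; 0, 1],
   by ext i j; fin_cases i <;> fin_cases j <;>
    simp [Matrix.mul_apply, Fin.sum_univ_two, mul_inv_cancel₀ ha],
   by ext i j; fin_cases i <;> fin_cases j <;>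
    simp [Matrix.mul_apply, Fin.sum_univ_two, inv_mul_cancel₀ ha]⟩

lemma diagA_zpow_val (a : ℝ) (ha : a ≠ 0) (n : ℤ) :
    ((diagA a ha ^ n : GL (Fin 2) ℝ) : Matrix (Fin 2) (Fin 2) ℝ) = !![a ^ n, 0; 0, 1] := by
  induction n using Int.induction_on with
  | zero => simp [Matrix.one_fin_two]
  | succ n ih =>
      rw [zpow_add_one, Units.val_mul, ih]
      show _ = !![a ^ ((n : ℤ) + 1), 0; 0, 1]
      rw [zpow_add_one₀ ha]
      show _ * !![a, 0; 0, 1] = _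
      ext i j; fin_cases i <;> fin_cases j <;>
    simp [Matrix.mul_apply, Fin.sum_univ_two]
  | pred n ih =>
      rw [zpow_sub_one, Units.val_mul, ih]
      show _ = !![a ^ ((-n : ℤ) - 1), 0; 0, 1]
      rw [zpow_sub_one₀ ha]
      show _ * !![a⁻¹, 0; 0, 1] = _
      ext i j; fin_cases i <;> fin_cases j <;>
    simp [Matrix.mul_apply, Fin.sum_univ_two]

/-- The closure in GL(2,ℝ) of the group generated by the matrices [[1,0],[tₙ,1]] and
[[a,0],[0,1]] contains all matrices [[aⁿ,0],[t,1]] with n ∈ ℤ, t ∈ ℝ. -/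
theorem closure_contains_fix_line (a : ℝ) (ha : 1 < a) (t : ℕ → ℝ)
    (ht0 : ∀ n, t n ≠ 0) (htlim : Tendsto t atTop (nhds 0)) :
    ∀ (n : ℤ) (s : ℝ) (g : GL (Fin 2) ℝ),
      (g : Matrix (Fin 2) (Fin 2) ℝ) = !![a ^ n, 0; s, 1] →
      g ∈ closure ((Subgroup.closure
        {A : GL (Fin 2) ℝ | (A : Matrix (Fin 2) (Fin 2) ℝ) = !![a, 0; 0, 1] ∨
          ∃ k : ℕ, (A : Matrix (Fin 2) (Fin 2) ℝ) = !![1, 0; t k, 1]}) :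
        Set (GL (Fin 2) ℝ)) := by
  intro n s g hg
  have ha0 : a ≠ 0 := by positivity
  set S : Set (GL (Fin 2) ℝ) :=
    {A : GL (Fin 2) ℝ | (A : Matrix (Fin 2) (Fin 2) ℝ) = !![a, 0; 0, 1] ∨
      ∃ k : ℕ, (A : Matrix (Fin 2) (Fin 2) ℝ) = !![1, 0; t k, 1]} with hS
  set H := Subgroup.closure S with hH
  -- generators
  have hDmem : diagA a ha0 ∈ H := Subgroup.subset_closure (Or.inl rfl)
  have hUmem : ∀ k, unip (t k) ∈ H := fun k => Subgroup.subset_closure (Or.inr ⟨k, rfl⟩)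
  -- density: unip s ∈ closure ↑H for all s
  have hunip : ∀ s : ℝ, unip s ∈ closure (H : Set (GL (Fin 2) ℝ)) := by
    intro s
    have hsmall : ∀ j : ℕ, ∃ m, |t m| < ((j : ℝ) + 1)⁻¹ := by
      intro j
      obtain ⟨N, hN⟩ := Metric.tendsto_atTop.mp htlim ((j : ℝ) + 1)⁻¹ (by positivity)
      exact ⟨N, by simpa [Real.dist_eq] using hN N le_rfl⟩
    choose k hk using hsmall
    set u : ℕ → ℝ := fun j => (⌊s / t (k j)⌋ : ℝ) * t (k j) with hu
    have hmem : ∀ j, unip (u j) ∈ H := by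
      intro j
      show unip ((⌊s / t (k j)⌋ : ℝ) * t (k j)) ∈ H
      rw [show ((⌊s / t (k j)⌋ : ℝ) * t (k j)) = ((⌊s / t (k j)⌋ : ℤ) : ℝ) * t (k j) by norm_num,
        unip_zsmul]
      exact zpow_mem (hUmem (k j)) _
    have hdist : ∀ j, |u j - s| ≤ |t (k j)| := by
      intro j
      have hne := ht0 (k j)
      have : u j - s = (((⌊s / t (k j)⌋ : ℝ)) - s / t (k j)) * t (k j) := by
        field_simp [hu]
        simp only [hu]; ring
      rw [this, abs_mul]
      have h1 : |(⌊s / t (k j)⌋ : ℝ) - s / t (k j)| ≤ 1 := by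
        rw [abs_sub_comm, abs_sub_le_iff]
        constructor
        · linarith [Int.sub_one_lt_floor (s / t (k j))]
        · linarith [Int.floor_le (s / t (k j))]
      nlinarith [abs_nonneg (t (k j))]
    have htend : Tendsto u atTop (nhds s) := by
      rw [tendsto_iff_dist_tendsto_zero]
      apply squeeze_zero (fun j => dist_nonneg) (fun j => ?_)
        (by simpa [one_div] using tendsto_one_div_add_atTop_nhds_zero_nat)
      calc dist (u j) s = |u j - s| := Real.dist_eq _ _
        _ ≤ |t (k j)| := hdist j
        _ ≤ ((j : ℝ) + 1)⁻¹ := (hk j).le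
      exact (one_div _).symm.le
    exact mem_closure_of_tendsto ((continuous_unip.tendsto s).comp htend)
      (Eventually.of_forall fun j => hmem j)
  -- decompose g
  have hgeq : g = diagA a ha0 ^ n * unip s := by
    ext i j
    rw [hg, Units.val_mul, diagA_zpow_val, unip_val]
    fin_cases i <;> fin_cases j <;> simp [Matrix.mul_apply, Fin.sum_univ_two]
  rw [hgeq, ← Subgroup.topologicalClosure_coe, SetLike.mem_coe]
  exact mul_mem (Subgroup.le_topologicalClosure H (zpow_mem hDmem n))
    (by rw [← SetLike.mem_coe, Subgroup.topologicalClosure_coe]; exact hunip s)
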